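/- For α > 0, let D_α = [0,α] × [0,α⁻¹] × [0,1] ⊂ ℝ³ and define Δ(α) = ∫_{D_α} ∫_{D_α} ‖x − y‖^{-1} dx dy. For L > 0 and t > 0, define I_L(t) = ∫_0^L ∫_0^L exp(−t(x − y)²) dx dy. Then Δ(α) = π^{-1/2} · ∫_0^∞ t^{-1/2} · I_α(t) · I_{α⁻¹}(t) · I_1(t) dt. -/

import Mathlib

open MeasureTheory Real
open scoped ENNReal

/-- The plate-compatible unit-volume rectangular cell
`D_α = [0,α] × [0,α⁻¹] × [0,1]` in Euclidean `ℝ³`. -/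
def cellD (α : ℝ) : Set (EuclideanSpace ℝ (Fin 3)) :=
  {x | x 0 ∈ Set.Icc 0 α ∧ x 1 ∈ Set.Icc 0 α⁻¹ ∧ x 2 ∈ Set.Icc 0 1}

/-- The flat Green energy `Δ(α)` of the cell `D_α`. -/
noncomputable def DeltaCell (α : ℝ) : ℝ :=
  ∫ x in cellD α, ∫ y in cellD α, ‖x - y‖⁻¹

/-- The one-dimensional Gaussian interval overlap `I_L(t)`. -/
noncomputable def intervalOverlap (L t : ℝ) : ℝ :=
  ∫ x in Set.Icc (0 : ℝ) L, ∫ y in Set.Icc (0 : ℝ) L, Real.exp (-t * (x - y) ^ 2)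

namespace Stmt15Aux

noncomputable section

abbrev E3 := EuclideanSpace ℝ (Fin 3)

/-- The side lengths. -/
def Lv (α : ℝ) : Fin 3 → ℝ := ![α, α⁻¹, 1]

lemma cellD_eq_preimage (α : ℝ) :
    cellD α = (⇑((MeasurableEquiv.toLp 2 (Fin 3 → ℝ)).symm)) ⁻¹'
      (Set.univ.pi fun i => Set.Icc 0 (Lv α i)) := by
  ext x
  simp only [cellD, Set.mem_setOf_eq, Set.mem_preimage, Set.mem_pi, Set.mem_univ, true_implies]
  constructor
  · rintro ⟨h0, h1, h2⟩ i
    fin_cases i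
    · simpa [Lv] using h0
    · simpa [Lv] using h1
    · simpa [Lv] using h2
  · intro h
    refine ⟨?_, ?_, ?_⟩
    · simpa [Lv] using h 0
    · simpa [Lv] using h 1
    · simpa [Lv] using h 2

lemma measurableSet_cellD (α : ℝ) : MeasurableSet (cellD α) := by
  rw [cellD_eq_preimage]
  exact (MeasurableSet.univ_pi fun i => measurableSet_Icc).preimage
    ((MeasurableEquiv.toLp 2 (Fin 3 → ℝ)).symm).measurable

lemma cellD_volume_ne_top (α : ℝ) : volume (cellD α) ≠ ⊤ := by
  rw [cellD_eq_preimage,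
    (EuclideanSpace.volume_preserving_symm_measurableEquiv_toLp (Fin 3)).measure_preimage
      (MeasurableSet.univ_pi fun i => measurableSet_Icc).nullMeasurableSet,
    volume_pi_pi]
  exact (ENNReal.prod_lt_top fun i _ => by
    rw [Real.volume_Icc]; exact ENNReal.ofReal_lt_top).ne

instance isFiniteMeasure_cellD (α : ℝ) : IsFiniteMeasure (volume.restrict (cellD α)) :=
  ⟨by rw [Measure.restrict_apply_univ]; exact (cellD_volume_ne_top α).lt_top⟩

instance isFiniteMeasure_Icc (L : ℝ) :
    IsFiniteMeasure ((volume : Measure ℝ).restrict (Set.Icc 0 L)) :=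
  ⟨by rw [Measure.restrict_apply_univ, Real.volume_Icc]; exact ENNReal.ofReal_lt_top⟩

/-- Generic: double lintegral of a `[0,1]`-valued measurable function over a finite
measure equals `ofReal` of the double Bochner integral. -/
lemma ofReal_double {X : Type*} [MeasurableSpace X] (μ : Measure X) [IsFiniteMeasure μ]
    (f : X → X → ℝ) (hf : Measurable (Function.uncurry f))
    (h0 : ∀ x y, 0 ≤ f x y) (h1 : ∀ x y, f x y ≤ 1) :
    ∫⁻ x, ∫⁻ y, ENNReal.ofReal (f x y) ∂μ ∂μ = ENNReal.ofReal (∫ x, ∫ y, f x y ∂μ ∂μ) := by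
  have hfx : ∀ x, Measurable (f x) := fun x => hf.comp (measurable_prodMk_left)
  have hint : ∀ x, Integrable (f x) μ := fun x =>
    (integrable_const (1 : ℝ)).mono' (hfx x).aestronglyMeasurable
      (Filter.Eventually.of_forall fun y => by
        rw [Real.norm_eq_abs, abs_of_nonneg (h0 x y)]; exact h1 x y)
  have key : ∀ x, ∫⁻ y, ENNReal.ofReal (f x y) ∂μ = ENNReal.ofReal (∫ y, f x y ∂μ) := fun x =>
    (ofReal_integral_eq_lintegral_ofReal (hint x) (Filter.Eventually.of_forall (h0 x))).symm
  simp_rw [key]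
  have hFm : StronglyMeasurable fun x => ∫ y, f x y ∂μ :=
    hf.stronglyMeasurable.integral_prod_right'
  have hF0 : ∀ x, 0 ≤ ∫ y, f x y ∂μ := fun x => integral_nonneg (h0 x)
  have hFb : ∀ x, (∫ y, f x y ∂μ) ≤ (μ Set.univ).toReal := fun x => by
    calc (∫ y, f x y ∂μ) ≤ ∫ _, (1 : ℝ) ∂μ := integral_mono (hint x) (integrable_const 1) (h1 x)
    _ = (μ Set.univ).toReal := by simp [Measure.real]
  have hFint : Integrable (fun x => ∫ y, f x y ∂μ) μ :=
    (integrable_const ((μ Set.univ).toReal)).mono' hFm.aestronglyMeasurable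
      (Filter.Eventually.of_forall fun x => by
        rw [Real.norm_eq_abs, abs_of_nonneg (hF0 x)]; exact hFb x)
  exact (ofReal_integral_eq_lintegral_ofReal hFint (Filter.Eventually.of_forall hF0)).symm

/-- Subordination formula for a single value `r > 0`. -/
lemma subord {r : ℝ} (hr : 0 < r) :
    ENNReal.ofReal r⁻¹ = ENNReal.ofReal (π ^ (-(1 : ℝ) / 2)) *
      ∫⁻ t in Set.Ioi (0 : ℝ),
        ENNReal.ofReal (t ^ (-(1 : ℝ) / 2) * Real.exp (-(r ^ 2 * t))) := by
  have hr2 : 0 < r ^ 2 := by positivity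
  have hint : IntegrableOn (fun t : ℝ => t ^ (-(1 : ℝ) / 2) * Real.exp (-(r ^ 2 * t)))
      (Set.Ioi 0) := by
    have h := integrableOn_rpow_mul_exp_neg_mul_rpow (p := 1) (s := -(1 : ℝ) / 2)
      (by norm_num) zero_lt_one hr2
    refine h.congr_fun (fun t _ => ?_) measurableSet_Ioi
    simp only [Real.rpow_one]; ring_nf
  have hval : (∫ t in Set.Ioi (0 : ℝ), t ^ (-(1 : ℝ) / 2) * Real.exp (-(r ^ 2 * t)))
      = Real.sqrt π * r⁻¹ := by
    have h := Real.integral_rpow_mul_exp_neg_mul_Ioi (a := 1 / 2) (r := r ^ 2)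
      (by norm_num) hr2
    rw [show (1 : ℝ) / 2 - 1 = -(1 : ℝ) / 2 by norm_num] at h
    rw [h, Real.Gamma_one_half_eq]
    have hpow : ((1 : ℝ) / r ^ 2) ^ ((1 : ℝ) / 2) = r⁻¹ := by
      rw [one_div, ← Real.rpow_natCast r 2, ← Real.rpow_neg hr.le, ← Real.rpow_mul hr.le]
      norm_num
      exact (Real.rpow_neg_one r) ▸ rfl
    rw [hpow, mul_comm]
  have hnn : 0 ≤ᵐ[volume.restrict (Set.Ioi (0 : ℝ))]
      fun t : ℝ => t ^ (-(1 : ℝ) / 2) * Real.exp (-(r ^ 2 * t)) := by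
    filter_upwards [ae_restrict_mem measurableSet_Ioi] with t ht
    have : (0:ℝ) < t := ht
    positivity
  rw [← ofReal_integral_eq_lintegral_ofReal hint hnn, hval, ← ENNReal.ofReal_mul (by positivity)]
  congr 1
  rw [Real.sqrt_eq_rpow, ← mul_assoc, ← Real.rpow_add Real.pi_pos]
  norm_num

/-- The one-dimensional inner Gaussian integral. -/
def Fb (L t : ℝ) : ℝ → ℝ := fun a => ∫ b in Set.Icc (0 : ℝ) L, Real.exp (-t * (a - b) ^ 2)

lemma Fb_stronglyMeasurable (L t : ℝ) : StronglyMeasurable (Fb L t) := by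
  have h : Continuous fun p : ℝ × ℝ => Real.exp (-t * (p.1 - p.2) ^ 2) := by fun_prop
  exact h.stronglyMeasurable.integral_prod_right'

lemma Fb_nonneg (L t a : ℝ) : 0 ≤ Fb L t a :=
  setIntegral_nonneg measurableSet_Icc fun _ _ => (Real.exp_pos _).le

lemma exp_integrableOn (L t a : ℝ) :
    IntegrableOn (fun b => Real.exp (-t * (a - b) ^ 2)) (Set.Icc (0 : ℝ) L) :=
  (Continuous.integrableOn_Icc (by fun_prop))

lemma Fb_le (L t a : ℝ) (ht : 0 ≤ t) (hL : 0 ≤ L) : Fb L t a ≤ L := by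
  have h1 : Fb L t a ≤ ∫ _ in Set.Icc (0 : ℝ) L, (1 : ℝ) :=
    setIntegral_mono (exp_integrableOn L t a) (integrable_const 1)
      (fun b => Real.exp_le_one_iff.2 (by nlinarith [sq_nonneg (a - b)]))
  have h2 : (∫ _ in Set.Icc (0 : ℝ) L, (1 : ℝ)) = L := by
    simp [Real.volume_Icc, hL]
  linarith

lemma Fb_le_sqrt (L t a : ℝ) (ht : 0 < t) : Fb L t a ≤ Real.sqrt (π / t) := by
  have hint : Integrable fun b : ℝ => Real.exp (-t * (a - b) ^ 2) :=
    (integrable_exp_neg_mul_sq ht).comp_sub_left a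
  calc Fb L t a ≤ ∫ b, Real.exp (-t * (a - b) ^ 2) :=
        setIntegral_le_integral hint (Filter.Eventually.of_forall fun b => (Real.exp_pos _).le)
  _ = Real.sqrt (π / t) := by
      rw [show (fun b : ℝ => Real.exp (-t * (a - b) ^ 2))
          = fun b => (fun u : ℝ => Real.exp (-t * u ^ 2)) (a - b) from rfl]
      rw [integral_sub_left_eq_self (fun u : ℝ => Real.exp (-t * u ^ 2)) volume a]
      exact integral_gaussian t

lemma Fb_integrableOn (L t c : ℝ) (hb : ∀ a, Fb L t a ≤ c) :
    IntegrableOn (Fb L t) (Set.Icc (0 : ℝ) L) := by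
  refine (integrable_const c).mono' (Fb_stronglyMeasurable L t).aestronglyMeasurable
    (Filter.Eventually.of_forall fun a => ?_)
  rw [Real.norm_eq_abs, abs_of_nonneg (Fb_nonneg L t a)]
  exact hb a

lemma I_eq_Fb (L t : ℝ) : intervalOverlap L t = ∫ a in Set.Icc (0 : ℝ) L, Fb L t a := rfl

lemma I_nonneg (L t : ℝ) : 0 ≤ intervalOverlap L t :=
  setIntegral_nonneg measurableSet_Icc fun a _ => Fb_nonneg L t a

lemma I_le_mul (L t c : ℝ) (hL : 0 ≤ L) (hb : ∀ a, Fb L t a ≤ c) :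
    intervalOverlap L t ≤ L * c := by
  have h1 : intervalOverlap L t ≤ ∫ _ in Set.Icc (0 : ℝ) L, c := by
    rw [I_eq_Fb]
    exact setIntegral_mono (Fb_integrableOn L t c hb) (integrable_const c) hb
  have h2 : (∫ _ in Set.Icc (0 : ℝ) L, c) = L * c := by
    simp [Real.volume_Icc, hL, smul_eq_mul]
  linarith

lemma I_le_sq (L t : ℝ) (hL : 0 ≤ L) (ht : 0 ≤ t) : intervalOverlap L t ≤ L * L :=
  I_le_mul L t L hL fun a => Fb_le L t a ht hL

lemma I_le_gauss (L t : ℝ) (hL : 0 ≤ L) (ht : 0 < t) :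
    intervalOverlap L t ≤ L * Real.sqrt (π / t) :=
  I_le_mul L t _ hL fun a => Fb_le_sqrt L t a ht

/-- ENNReal version of the overlap integral, measurable in `t`. -/
def Jl (L : ℝ) : ℝ → ℝ≥0∞ := fun t =>
  ∫⁻ a in Set.Icc (0 : ℝ) L, ∫⁻ b in Set.Icc (0 : ℝ) L,
    ENNReal.ofReal (Real.exp (-t * (a - b) ^ 2))

lemma Jl_measurable (L : ℝ) : Measurable (Jl L) := by
  have h1 : Measurable fun q : (ℝ × ℝ) × ℝ =>
      ENNReal.ofReal (Real.exp (-q.1.1 * (q.1.2 - q.2) ^ 2)) := by fun_prop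
  have h2 : Measurable fun p : ℝ × ℝ =>
      ∫⁻ b in Set.Icc (0 : ℝ) L, ENNReal.ofReal (Real.exp (-p.1 * (p.2 - b) ^ 2)) :=
    h1.lintegral_prod_right' (ν := volume.restrict (Set.Icc (0 : ℝ) L))
  exact h2.lintegral_prod_right' (ν := volume.restrict (Set.Icc (0 : ℝ) L))

lemma Jl_eq (L t : ℝ) (ht : 0 < t) : Jl L t = ENNReal.ofReal (intervalOverlap L t) :=
  ofReal_double (volume.restrict (Set.Icc (0 : ℝ) L)) (fun a b => Real.exp (-t * (a - b) ^ 2))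
    (by fun_prop) (fun a b => (Real.exp_pos _).le)
    (fun a b => Real.exp_le_one_iff.2 (by nlinarith [sq_nonneg (a - b)]))

/-- Factorization of indicator products over pi sets. -/
lemma integral_pi_prod_indicator (s : Fin 3 → Set ℝ) (hs : ∀ i, MeasurableSet (s i))
    (f : Fin 3 → ℝ → ℝ) :
    (∫ v in Set.univ.pi s, ∏ i, f i (v i)) = ∏ i, ∫ b in s i, f i b := by
  rw [← integral_indicator (MeasurableSet.univ_pi hs)]
  have h : ∀ v : Fin 3 → ℝ,
      (Set.univ.pi s).indicator (fun v => ∏ i, f i (v i)) v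
        = ∏ i, (s i).indicator (f i) (v i) := by
    intro v
    by_cases hv : v ∈ Set.univ.pi s
    · rw [Set.indicator_of_mem hv]
      exact Finset.prod_congr rfl fun i _ =>
        (Set.indicator_of_mem (hv i (Set.mem_univ i)) _).symm
    · rw [Set.indicator_of_notMem hv]
      rw [Set.mem_pi] at hv
      push_neg at hv
      obtain ⟨i, _, hi⟩ := hv
      exact (Finset.prod_eq_zero (Finset.mem_univ i) (Set.indicator_of_notMem hi _)).symm
  simp_rw [h]
  rw [volume_pi, MeasureTheory.integral_fintype_prod_eq_prod (fun i => (s i).indicator (f i))]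
  exact Finset.prod_congr rfl fun i _ => integral_indicator (hs i)

lemma factor (α t : ℝ) :
    (∫ x in cellD α, ∫ y in cellD α, Real.exp (-t * ‖x - y‖ ^ 2))
      = intervalOverlap α t * intervalOverlap α⁻¹ t * intervalOverlap 1 t := by
  have hmp := EuclideanSpace.volume_preserving_symm_measurableEquiv_toLp (Fin 3)
  have hemb := ((MeasurableEquiv.toLp 2 (Fin 3 → ℝ)).symm).measurableEmbedding
  have hs : ∀ i, MeasurableSet (Set.Icc (0 : ℝ) (Lv α i)) := fun _ => measurableSet_Icc
  have hnorm : ∀ x y : E3,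
      Real.exp (-t * ‖x - y‖ ^ 2) = ∏ i, Real.exp (-t * (x i - y i) ^ 2) := by
    intro x y
    rw [← Real.exp_sum]
    congr 1
    have h2 : ‖x - y‖ ^ 2 = ∑ i, (x i - y i) ^ 2 := by
      rw [EuclideanSpace.norm_eq, Real.sq_sqrt (by positivity)]
      refine Finset.sum_congr rfl fun i _ => ?_
      simp [Real.norm_eq_abs, sq_abs]
    rw [h2, Finset.mul_sum]
  have inner_eq : ∀ x : E3,
      (∫ y in cellD α, Real.exp (-t * ‖x - y‖ ^ 2))
        = ∏ i, ∫ b in Set.Icc (0 : ℝ) (Lv α i), Real.exp (-t * (x i - b) ^ 2) := by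
    intro x
    have hfun : (fun y : E3 => Real.exp (-t * ‖x - y‖ ^ 2))
        = fun y => (fun v : Fin 3 → ℝ => ∏ i, Real.exp (-t * (x i - v i) ^ 2))
            (((MeasurableEquiv.toLp 2 (Fin 3 → ℝ)).symm) y) := by
      funext y; exact hnorm x y
    rw [hfun, cellD_eq_preimage,
      hmp.setIntegral_preimage_emb hemb
        (fun v : Fin 3 → ℝ => ∏ i, Real.exp (-t * (x i - v i) ^ 2)) _]
    exact integral_pi_prod_indicator _ hs (fun i b => Real.exp (-t * (x i - b) ^ 2))
  simp_rw [inner_eq]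
  have houter : (fun x : E3 =>
      ∏ i, ∫ b in Set.Icc (0 : ℝ) (Lv α i), Real.exp (-t * (x i - b) ^ 2))
      = fun x => (fun u : Fin 3 → ℝ =>
          ∏ i, ∫ b in Set.Icc (0 : ℝ) (Lv α i), Real.exp (-t * (u i - b) ^ 2))
          (((MeasurableEquiv.toLp 2 (Fin 3 → ℝ)).symm) x) := rfl
  rw [houter, cellD_eq_preimage,
    hmp.setIntegral_preimage_emb hemb
      (fun u : Fin 3 → ℝ =>
        ∏ i, ∫ b in Set.Icc (0 : ℝ) (Lv α i), Real.exp (-t * (u i - b) ^ 2)) _,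
    integral_pi_prod_indicator _ hs
      (fun i a => ∫ b in Set.Icc (0 : ℝ) (Lv α i), Real.exp (-t * (a - b) ^ 2)),
    Fin.prod_univ_three]
  simp only [Lv, Matrix.cons_val_zero, Matrix.cons_val_one, Matrix.head_cons,
    Matrix.cons_val_two, Matrix.tail_cons]
  rfl

end

end Stmt15Aux

open Stmt15Aux in
theorem stmt_15 (α : ℝ) (hα : 0 < α) :
    DeltaCell α
      = π ^ (-(1 : ℝ) / 2) *
          ∫ t in Set.Ioi (0 : ℝ),
            t ^ (-(1 : ℝ) / 2) * intervalOverlap α t * intervalOverlap α⁻¹ t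
              * intervalOverlap 1 t := by
  classical
  have hπ : (0 : ℝ) < π := Real.pi_pos
  set cπ : ℝ≥0∞ := ENNReal.ofReal (π ^ (-(1 : ℝ) / 2)) with hcπ
  have hcπ_ne : cπ ≠ ⊤ := ENNReal.ofReal_ne_top
  set g : E3 → E3 → ℝ → ℝ≥0∞ := fun x y t =>
    ENNReal.ofReal (t ^ (-(1 : ℝ) / 2) * Real.exp (-(‖x - y‖ ^ 2 * t))) with hgdef
  have hgm : Measurable fun q : (E3 × E3) × ℝ => g q.1.1 q.1.2 q.2 := by
    simp only [hgdef]; fun_prop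
  set B : ℝ≥0∞ := ∫⁻ t in Set.Ioi (0 : ℝ),
      ENNReal.ofReal (t ^ (-(1 : ℝ) / 2)) * ENNReal.ofReal (intervalOverlap α t)
        * ENNReal.ofReal (intervalOverlap α⁻¹ t) * ENNReal.ofReal (intervalOverlap 1 t)
    with hBdef
  -- the main identity in ℝ≥0∞
  have hA_eq : (∫⁻ x in cellD α, ∫⁻ y in cellD α, ENNReal.ofReal ‖x - y‖⁻¹) = cπ * B := by
    have hsub : ∀ x : E3, (∫⁻ y in cellD α, ENNReal.ofReal ‖x - y‖⁻¹)
        = ∫⁻ y in cellD α, cπ * ∫⁻ t in Set.Ioi (0 : ℝ), g x y t := by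
      intro x
      refine lintegral_congr_ae ?_
      have hx : ∀ᵐ y ∂(volume.restrict (cellD α)), y ≠ x := by
        refine ae_mono Measure.restrict_le_self ?_
        refine mem_ae_iff.2 ?_
        have hset : {y : E3 | y ≠ x}ᶜ = {x} := by ext y; simp
        rw [hset]
        exact measure_singleton x
      filter_upwards [hx] with y hy
      have hr : 0 < ‖x - y‖ := by
        rw [norm_pos_iff]
        exact sub_ne_zero.mpr (Ne.symm hy)
      simpa [hgdef] using subord hr
    calc (∫⁻ x in cellD α, ∫⁻ y in cellD α, ENNReal.ofReal ‖x - y‖⁻¹)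
        = ∫⁻ x in cellD α, cπ * ∫⁻ y in cellD α, ∫⁻ t in Set.Ioi (0 : ℝ), g x y t := by
          refine lintegral_congr fun x => ?_
          rw [hsub x, lintegral_const_mul' _ _ hcπ_ne]
      _ = cπ * ∫⁻ x in cellD α, ∫⁻ y in cellD α, ∫⁻ t in Set.Ioi (0 : ℝ), g x y t :=
          lintegral_const_mul' _ _ hcπ_ne
      _ = cπ * ∫⁻ x in cellD α, ∫⁻ t in Set.Ioi (0 : ℝ), ∫⁻ y in cellD α, g x y t := by
          congr 1
          refine lintegral_congr fun x => ?_
          refine lintegral_lintegral_swap ?_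
          have : Measurable fun p : E3 × ℝ => g x p.1 p.2 :=
            hgm.comp ((measurable_const.prodMk measurable_fst).prodMk measurable_snd)
          exact this.aemeasurable
      _ = cπ * ∫⁻ t in Set.Ioi (0 : ℝ), ∫⁻ x in cellD α, ∫⁻ y in cellD α, g x y t := by
          congr 1
          refine lintegral_lintegral_swap ?_
          have hinner : Measurable fun q : (E3 × ℝ) × E3 => g q.1.1 q.2 q.1.2 :=
            hgm.comp ((measurable_fst.fst.prodMk measurable_snd).prodMk measurable_fst.snd)
          exact (hinner.lintegral_prod_right'
            (ν := volume.restrict (cellD α))).aemeasurable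
      _ = cπ * B := by
          congr 1
          refine lintegral_congr_ae ?_
          filter_upwards [ae_restrict_mem measurableSet_Ioi] with t ht
          have htp : (0 : ℝ) < t := ht
          have hsplit : ∀ x y : E3, g x y t
              = ENNReal.ofReal (t ^ (-(1 : ℝ) / 2))
                * ENNReal.ofReal (Real.exp (-t * ‖x - y‖ ^ 2)) := by
            intro x y
            simp only [hgdef]
            rw [← ENNReal.ofReal_mul (Real.rpow_nonneg htp.le _)]
            congr 2
            ring
          simp_rw [hsplit, lintegral_const_mul' _ _ ENNReal.ofReal_ne_top]
          rw [ofReal_double (volume.restrict (cellD α))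
            (fun x y => Real.exp (-t * ‖x - y‖ ^ 2)) (by fun_prop)
            (fun x y => (Real.exp_pos _).le)
            (fun x y => Real.exp_le_one_iff.2 (by nlinarith [sq_nonneg ‖x - y‖, norm_nonneg (x - y)])),
            factor α t,
            ENNReal.ofReal_mul (mul_nonneg (I_nonneg _ _) (I_nonneg _ _)),
            ENNReal.ofReal_mul (I_nonneg _ _)]
          ring
  -- finiteness of B
  have hB_fin : B ≠ ⊤ := by
    have hBsplit : B = (∫⁻ t in Set.Ioc (0 : ℝ) 1,
        ENNReal.ofReal (t ^ (-(1 : ℝ) / 2)) * ENNReal.ofReal (intervalOverlap α t)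
          * ENNReal.ofReal (intervalOverlap α⁻¹ t) * ENNReal.ofReal (intervalOverlap 1 t))
        + ∫⁻ t in Set.Ioi (1 : ℝ),
        ENNReal.ofReal (t ^ (-(1 : ℝ) / 2)) * ENNReal.ofReal (intervalOverlap α t)
          * ENNReal.ofReal (intervalOverlap α⁻¹ t) * ENNReal.ofReal (intervalOverlap 1 t) := by
      rw [hBdef, ← lintegral_union measurableSet_Ioi (Set.Ioc_disjoint_Ioi le_rfl),
        Set.Ioc_union_Ioi_eq_Ioi zero_le_one]
    rw [hBsplit]
    have h1 : (∫⁻ t in Set.Ioc (0 : ℝ) 1,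
        ENNReal.ofReal (t ^ (-(1 : ℝ) / 2)) * ENNReal.ofReal (intervalOverlap α t)
          * ENNReal.ofReal (intervalOverlap α⁻¹ t) * ENNReal.ofReal (intervalOverlap 1 t))
        ≤ ∫⁻ t in Set.Ioc (0 : ℝ) 1, ENNReal.ofReal (t ^ (-(1 : ℝ) / 2)) := by
      refine lintegral_mono_ae ?_
      filter_upwards [ae_restrict_mem measurableSet_Ioc] with t ht
      have htp : (0 : ℝ) < t := ht.1
      calc ENNReal.ofReal (t ^ (-(1 : ℝ) / 2)) * ENNReal.ofReal (intervalOverlap α t)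
            * ENNReal.ofReal (intervalOverlap α⁻¹ t) * ENNReal.ofReal (intervalOverlap 1 t)
          ≤ ENNReal.ofReal (t ^ (-(1 : ℝ) / 2)) * ENNReal.ofReal (α * α)
            * ENNReal.ofReal (α⁻¹ * α⁻¹) * ENNReal.ofReal (1 * 1) := by
            gcongr
            · exact I_le_sq α t hα.le htp.le
            · exact I_le_sq α⁻¹ t (by positivity) htp.le
            · exact I_le_sq 1 t zero_le_one htp.le
        _ = ENNReal.ofReal (t ^ (-(1 : ℝ) / 2)) := by
            rw [← ENNReal.ofReal_mul (by positivity), ← ENNReal.ofReal_mul (by positivity),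
              ← ENNReal.ofReal_mul (by positivity)]
            congr 1
            field_simp
    have h2 : (∫⁻ t in Set.Ioi (1 : ℝ),
        ENNReal.ofReal (t ^ (-(1 : ℝ) / 2)) * ENNReal.ofReal (intervalOverlap α t)
          * ENNReal.ofReal (intervalOverlap α⁻¹ t) * ENNReal.ofReal (intervalOverlap 1 t))
        ≤ ∫⁻ t in Set.Ioi (1 : ℝ), ENNReal.ofReal (π * t ^ (-(3 : ℝ) / 2)) := by
      refine lintegral_mono_ae ?_
      filter_upwards [ae_restrict_mem measurableSet_Ioi] with t ht
      have htp : (0 : ℝ) < t := lt_trans one_pos ht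
      have hsq : Real.sqrt (π / t) * Real.sqrt (π / t) = π / t :=
        Real.mul_self_sqrt (by positivity)
      calc ENNReal.ofReal (t ^ (-(1 : ℝ) / 2)) * ENNReal.ofReal (intervalOverlap α t)
            * ENNReal.ofReal (intervalOverlap α⁻¹ t) * ENNReal.ofReal (intervalOverlap 1 t)
          ≤ ENNReal.ofReal (t ^ (-(1 : ℝ) / 2))
            * ENNReal.ofReal (α * Real.sqrt (π / t))
            * ENNReal.ofReal (α⁻¹ * Real.sqrt (π / t)) * ENNReal.ofReal (1 * 1) := by
            gcongr
            · exact I_le_gauss α t hα.le htp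
            · exact I_le_gauss α⁻¹ t (by positivity) htp
            · exact I_le_sq 1 t zero_le_one htp.le
        _ = ENNReal.ofReal (π * t ^ (-(3 : ℝ) / 2)) := by
            rw [← ENNReal.ofReal_mul (by positivity), ← ENNReal.ofReal_mul (by positivity),
              ← ENNReal.ofReal_mul (by positivity)]
            congr 1
            have hca : t ^ (-(1 : ℝ) / 2) * (α * Real.sqrt (π / t))
                * (α⁻¹ * Real.sqrt (π / t)) * (1 * 1)
                = (α * α⁻¹) * (Real.sqrt (π / t) * Real.sqrt (π / t))
                  * t ^ (-(1 : ℝ) / 2) := by ring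
            rw [hca, mul_inv_cancel₀ hα.ne', one_mul, hsq]
            rw [div_eq_mul_inv, ← Real.rpow_neg_one t, mul_assoc,
              ← Real.rpow_add htp]
            norm_num
    have hfin1 : (∫⁻ t in Set.Ioc (0 : ℝ) 1, ENNReal.ofReal (t ^ (-(1 : ℝ) / 2))) < ⊤ := by
      have hint : IntegrableOn (fun t : ℝ => t ^ (-(1 : ℝ) / 2)) (Set.Ioc (0 : ℝ) 1) :=
        (intervalIntegral.intervalIntegrable_rpow' (by norm_num)).1
      have h0 : 0 ≤ᵐ[volume.restrict (Set.Ioc (0 : ℝ) 1)] fun t : ℝ => t ^ (-(1 : ℝ) / 2) := by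
        filter_upwards [ae_restrict_mem measurableSet_Ioc] with t ht
        exact Real.rpow_nonneg ht.1.le _
      exact (hasFiniteIntegral_iff_ofReal h0).1 hint.2
    have hfin2 : (∫⁻ t in Set.Ioi (1 : ℝ), ENNReal.ofReal (π * t ^ (-(3 : ℝ) / 2))) < ⊤ := by
      have hint : IntegrableOn (fun t : ℝ => π * t ^ (-(3 : ℝ) / 2)) (Set.Ioi (1 : ℝ)) :=
        (integrableOn_Ioi_rpow_of_lt (by norm_num) one_pos).const_mul π
      have h0 : 0 ≤ᵐ[volume.restrict (Set.Ioi (1 : ℝ))]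
          fun t : ℝ => π * t ^ (-(3 : ℝ) / 2) := by
        filter_upwards [ae_restrict_mem measurableSet_Ioi] with t ht
        have : (0 : ℝ) < t := lt_trans one_pos ht
        positivity
      exact (hasFiniteIntegral_iff_ofReal h0).1 hint.2
    exact (ENNReal.add_lt_top.2 ⟨lt_of_le_of_lt h1 hfin1, lt_of_le_of_lt h2 hfin2⟩).ne
  -- RHS conversion
  have hRHS : (∫ t in Set.Ioi (0 : ℝ),
      t ^ (-(1 : ℝ) / 2) * intervalOverlap α t * intervalOverlap α⁻¹ t
        * intervalOverlap 1 t) = B.toReal := by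
    set f : ℝ → ℝ := fun t => t ^ (-(1 : ℝ) / 2) * intervalOverlap α t
      * intervalOverlap α⁻¹ t * intervalOverlap 1 t with hfdef
    have hgm' : Measurable fun t : ℝ => t ^ (-(1 : ℝ) / 2) * (Jl α t).toReal
        * (Jl α⁻¹ t).toReal * (Jl 1 t).toReal := by
      have h0 : Measurable fun t : ℝ => t ^ (-(1 : ℝ) / 2) := by fun_prop
      exact ((h0.mul (Jl_measurable α).ennreal_toReal).mul
        (Jl_measurable α⁻¹).ennreal_toReal).mul (Jl_measurable 1).ennreal_toReal
    have hae : f =ᵐ[volume.restrict (Set.Ioi (0 : ℝ))]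
        fun t => t ^ (-(1 : ℝ) / 2) * (Jl α t).toReal
          * (Jl α⁻¹ t).toReal * (Jl 1 t).toReal := by
      filter_upwards [ae_restrict_mem measurableSet_Ioi] with t ht
      have htp : (0 : ℝ) < t := ht
      rw [hfdef]
      simp only [Jl_eq _ _ htp, ENNReal.toReal_ofReal (I_nonneg _ _)]
    have hmeas : AEStronglyMeasurable f (volume.restrict (Set.Ioi (0 : ℝ))) :=
      (hgm'.aestronglyMeasurable).congr hae.symm
    have hnn : 0 ≤ᵐ[volume.restrict (Set.Ioi (0 : ℝ))] f := by
      filter_upwards [ae_restrict_mem measurableSet_Ioi] with t ht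
      have htp : (0 : ℝ) < t := ht
      have hrp : (0:ℝ) ≤ t ^ (-(1 : ℝ) / 2) := Real.rpow_nonneg htp.le _
      rw [hfdef]
      exact mul_nonneg (mul_nonneg (mul_nonneg hrp (I_nonneg α t)) (I_nonneg α⁻¹ t))
        (I_nonneg 1 t)
    rw [integral_eq_lintegral_of_nonneg_ae hnn hmeas]
    congr 1
    refine lintegral_congr_ae ?_
    filter_upwards [ae_restrict_mem measurableSet_Ioi] with t ht
    have htp : (0 : ℝ) < t := ht
    have hrp : (0:ℝ) ≤ t ^ (-(1 : ℝ) / 2) := Real.rpow_nonneg htp.le _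
    rw [hfdef]
    rw [ENNReal.ofReal_mul (mul_nonneg (mul_nonneg hrp (I_nonneg α t)) (I_nonneg α⁻¹ t)),
      ENNReal.ofReal_mul (mul_nonneg hrp (I_nonneg α t)), ENNReal.ofReal_mul hrp]
  -- LHS conversion
  have hinvmeas : Measurable fun p : E3 × E3 => ENNReal.ofReal ‖p.1 - p.2‖⁻¹ := by fun_prop
  have hG : Measurable fun x : E3 => ∫⁻ y in cellD α, ENNReal.ofReal ‖x - y‖⁻¹ :=
    hinvmeas.lintegral_prod_right' (ν := volume.restrict (cellD α))
  have hAne : (∫⁻ x in cellD α, ∫⁻ y in cellD α, ENNReal.ofReal ‖x - y‖⁻¹) ≠ ⊤ := by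
    rw [hA_eq]
    exact (ENNReal.mul_lt_top hcπ_ne.lt_top hB_fin.lt_top).ne
  have hfinae : ∀ᵐ x ∂(volume.restrict (cellD α)),
      (∫⁻ y in cellD α, ENNReal.ofReal ‖x - y‖⁻¹) < ⊤ := ae_lt_top hG hAne
  have h1 : ∀ x : E3, (∫ y in cellD α, ‖x - y‖⁻¹)
      = (∫⁻ y in cellD α, ENNReal.ofReal ‖x - y‖⁻¹).toReal := by
    intro x
    refine integral_eq_lintegral_of_nonneg_ae
      (Filter.Eventually.of_forall fun y => inv_nonneg.2 (norm_nonneg _)) ?_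
    exact ((measurable_const.sub measurable_id).norm.inv).aestronglyMeasurable
  have hLHS : DeltaCell α = (cπ * B).toReal := by
    calc DeltaCell α
        = ∫ x in cellD α, (∫⁻ y in cellD α, ENNReal.ofReal ‖x - y‖⁻¹).toReal := by
          unfold DeltaCell
          exact setIntegral_congr_fun (measurableSet_cellD α) fun x _ => h1 x
      _ = (∫⁻ x in cellD α,
            ENNReal.ofReal ((∫⁻ y in cellD α, ENNReal.ofReal ‖x - y‖⁻¹).toReal)).toReal := by
          refine integral_eq_lintegral_of_nonneg_ae
            (Filter.Eventually.of_forall fun x => ENNReal.toReal_nonneg) ?_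
          exact hG.ennreal_toReal.aestronglyMeasurable
      _ = (cπ * B).toReal := by
          rw [← hA_eq]
          congr 1
          refine lintegral_congr_ae ?_
          filter_upwards [hfinae] with x hx
          rw [ENNReal.ofReal_toReal hx.ne]
  rw [hLHS, hRHS, ENNReal.toReal_mul, hcπ, ENNReal.toReal_ofReal (Real.rpow_nonneg hπ.le _)]
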